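/- Let M be a local Moufang set with fixed non-equivalent points 0 and ∞. For each unit x in X, there is a unique element μ_x in the double coset U_0 α_x U_0 such that 0·μ_x = ∞ and ∞·μ_x = 0; moreover μ_x = g α_x h where g is the unique element of U_0 mapping ∞ to -x and h is the unique element of U_0 mapping x to ∞, and both g and h lie in U_0 \ U_0°, where U_0° is the kernel of the map from U_0 to its induced action on equivalence classes. -/

import Mathlib

open Equiv

structure LocalMoufangSet (X : Type*) where
  r : X → X → Prop
  requiv : Equivalence r
  U : X → Subgroup (Equiv.Perm X)
  preserves : ∀ x : X, ∀ u ∈ U x, ∀ a b : X, r a b ↔ r (u a) (u b)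
  big : ∃ a b c : X, ¬ r a b ∧ ¬ r b c ∧ ¬ r a c
  lm1 : ∀ x y : X, r x y → ∀ u ∈ U x, ∃ v ∈ U y, ∀ z : X, r (u z) (v z)
  lm2_fix : ∀ x : X, ∀ u ∈ U x, u x = x
  lm2_trans : ∀ x y z : X, ¬ r y x → ¬ r z x → ∃! u : Equiv.Perm X, u ∈ U x ∧ u y = z
  lm2'_trans : ∀ x y z : X, ¬ r y x → ¬ r z x → ∃ u ∈ U x, r (u y) z
  lm2'_free : ∀ x : X, ∀ u ∈ U x, ∀ y : X, ¬ r y x → r (u y) y → ∀ z : X, r (u z) z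
  lm3 : ∀ x : X, ∀ g ∈ (⨆ y : X, U y : Subgroup (Equiv.Perm X)),
      (U x).map (MulAut.conj g).toMonoidHom = U (g x)

namespace LocalMoufangSet

variable {X : Type*} (M : LocalMoufangSet X)

/-- The little projective group. -/
def G : Subgroup (Equiv.Perm X) := ⨆ x : X, M.U x

/-- `x` is a unit with respect to the base points `o` (zero) and `ι` (infinity). -/
def IsUnitPt (o ι x : X) : Prop := ¬ M.r x o ∧ ¬ M.r x ι

/-- `μ` is the μ-map of `x`: it lies in the double coset `U_0 α_x U_0` and swaps `o` and `ι`.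
(We use the left-action convention: a right product `g α h` corresponds to `h * α * g`.) -/
def IsMuMap (o ι x : X) (μ : Equiv.Perm X) : Prop :=
  μ o = ι ∧ μ ι = o ∧
    ∃ a ∈ M.U ι, a o = x ∧ ∃ g ∈ M.U o, ∃ h ∈ M.U o, μ = h * a * g

/-- Specialness with respect to a μ-map `τ`: `(-x)τ = -(xτ)` for all units `x`. -/
def Special (o ι : X) (τ : Equiv.Perm X) : Prop :=
  ∀ z : X, IsUnitPt M o ι z → ∀ a ∈ M.U ι, a o = z → ∀ b ∈ M.U ι, b o = τ z →
    τ (a⁻¹ o) = b⁻¹ o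

end LocalMoufangSet


/-- existence and uniqueness of the μ-map of a unit `x`.
(Left-action convention: the right product `g α_x h` is `h * α * g`.)
Here `U_0°` is the kernel of the induced action of `U_0` on equivalence classes,
so `g ∈ U_0 \\ U_0°` means `∃ z, ¬ r (g z) z`. -/
theorem stmt3 {X : Type*} (M : LocalMoufangSet X) (o ι : X) (h0 : ¬ M.r o ι)
    (x : X) (hx : M.IsUnitPt o ι x)
    (α : Equiv.Perm X) (hαU : α ∈ M.U ι) (hαo : α o = x) :
    (∃! μ : Equiv.Perm X,
      (∃ g ∈ M.U o, ∃ h ∈ M.U o, μ = h * α * g) ∧ μ o = ι ∧ μ ι = o) ∧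
    (∀ g h : Equiv.Perm X, g ∈ M.U o → h ∈ M.U o → g ι = α⁻¹ o → h x = ι →
      (((h * α * g) o = ι ∧ (h * α * g) ι = o) ∧
        (∃ z, ¬ M.r (g z) z) ∧ (∃ z, ¬ M.r (h z) z))) := by

  have rιo : ¬ M.r ι o := fun h => h0 (M.requiv.symm h)
  have hαι : α ι = ι := M.lm2_fix ι α hαU
  have hαinvι : α⁻¹ ι = ι := by
    have := congrArg (α⁻¹ : Equiv.Perm X) hαι
    simpa using this.symm
  have hnr1 : ¬ M.r (α⁻¹ o) o := by
    intro h
    have h2 := (M.preserves ι α hαU (α⁻¹ o) o).mp h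
    rw [← Equiv.Perm.mul_apply, mul_inv_cancel, Equiv.Perm.one_apply, hαo] at h2
    exact hx.1 (M.requiv.symm h2)
  have hnr2 : ¬ M.r (α⁻¹ o) ι := by
    intro h
    have h2 := (M.preserves ι α hαU (α⁻¹ o) ι).mp h
    rw [← Equiv.Perm.mul_apply, mul_inv_cancel, Equiv.Perm.one_apply, hαι] at h2
    exact h0 h2
  -- unique g with g ι = α⁻¹ o and unique h with h x = ι
  obtain ⟨g0, ⟨hg0U, hg0⟩, hg0uniq⟩ := M.lm2_trans o ι (α⁻¹ o) rιo hnr1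
  obtain ⟨h0', ⟨hh0U, hh0⟩, hh0uniq⟩ := M.lm2_trans o x ι hx.1 rιo
  have key : ∀ g h : Equiv.Perm X, g ∈ M.U o → h ∈ M.U o → g ι = α⁻¹ o → h x = ι →
      (h * α * g) o = ι ∧ (h * α * g) ι = o := by
    intro g h hg hh hgι hhx
    constructor
    · have hgo : g o = o := M.lm2_fix o g hg
      simp [Equiv.Perm.mul_apply, hgo, hαo, hhx]
    · have hho : h o = o := M.lm2_fix o h hh
      simp [Equiv.Perm.mul_apply, hgι, hho]
  constructor
  · refine ⟨h0' * α * g0, ⟨⟨g0, hg0U, h0', hh0U, rfl⟩, key g0 h0' hg0U hh0U hg0 hh0⟩, ?_⟩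
    rintro μ ⟨⟨g, hg, h, hh, rfl⟩, hμo, hμι⟩
    -- h x = ι from hμo, g ι = α⁻¹ o from hμι
    have hgo : g o = o := M.lm2_fix o g hg
    have hho : h o = o := M.lm2_fix o h hh
    have hhx : h x = ι := by
      have : (h * α * g) o = h x := by simp [Equiv.Perm.mul_apply, hgo, hαo]
      rw [this] at hμo; exact hμo
    have hgι : g ι = α⁻¹ o := by
      have h1 : h (α (g ι)) = o := by
        simpa [Equiv.Perm.mul_apply] using hμι
      have h2 : h (α (g ι)) = h o := by rw [h1, hho]
      have h3 : α (g ι) = o := h.injective h2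
      have := congrArg (α⁻¹ : Equiv.Perm X) h3
      simpa using this
    have eg : g = g0 := by
      rw [hg0uniq g ⟨hg, hgι⟩]
    have eh : h = h0' := by
      rw [hh0uniq h ⟨hh, hhx⟩]
    rw [eg, eh]
  · intro g h hg hh hgι hhx
    refine ⟨key g h hg hh hgι hhx, ⟨ι, ?_⟩, ⟨x, ?_⟩⟩
    · rw [hgι]; exact hnr2
    · rw [hhx]; exact fun hc => hx.2 (M.requiv.symm hc)
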